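/- Let M = K_{1,k} be a star (one center adjacent to k ≥ 1 leaves) and let G be a connected graph containing an M-subdivision. Then the family L(M,G) of maximum M-subdivisions in G is pairwise intersecting, i.e., any two maximum M-subdivisions in G share a vertex. -/

import Mathlib

open SimpleGraph

/-- A multigraph with vertex type `W` and edge type `F`: each edge has an
unordered pair of endpoints (possibly equal, giving a loop). -/
structure Multigraph (W : Type*) (F : Type*) where
  ends : F → Sym2 W

namespace Multigraph

variable {W F : Type*}

/-- Adjacency in a multigraph. -/
def Adj (M : Multigraph W F) (u v : W) : Prop :=
  ∃ e : F, M.ends e = s(u, v)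

/-- A multigraph is connected if it is nonempty and any two vertices are joined by a walk. -/
def Connected (M : Multigraph W F) : Prop :=
  Nonempty W ∧ ∀ u v : W, Relation.ReflTransGen M.Adj u v

/-- Delete the edge `e` from the multigraph `M`. -/
def deleteEdge (M : Multigraph W F) (e : F) : Multigraph W {f : F // f ≠ e} where
  ends f := M.ends f.1

/-- An edge of a (connected) multigraph is a cut-edge if deleting it disconnects
the multigraph. -/
def IsCutEdge (M : Multigraph W F) (e : F) : Prop :=
  ¬ (M.deleteEdge e).Connected

end Multigraph

variable {V W F : Type*}

/-- `Q` is (the subgraph realizing) an `M`-subdivision inside the simple graph `G`: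
there is an injective placement `b` of the branch vertices of `M`, and for each edge
`e` of `M` with ends `u e`, `v e` a path (a cycle, if `e` is a loop) of `G` joining
`b (u e)` to `b (v e)`; these paths are internally disjoint from each other and from
the branch vertices, are pairwise edge-disjoint, and their union is exactly `Q`. -/
def IsSubdivisionIn (M : Multigraph W F) (G : SimpleGraph V) (Q : G.Subgraph) : Prop :=
  ∃ (b : W → V) (u v : F → W) (P : ∀ e : F, G.Walk (b (u e)) (b (v e))),
    Function.Injective b ∧
    (∀ e, M.ends e = s(u e, v e)) ∧
    (∀ e, ∀ h : u e = v e, ((P e).copy rfl (congrArg b h.symm)).IsCycle) ∧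
    (∀ e, u e ≠ v e → (P e).IsPath) ∧
    (∀ e, ∀ x ∈ (P e).support, x ∈ Set.range b → x = b (u e) ∨ x = b (v e)) ∧
    (∀ e e', e ≠ e' → ∀ x, x ∈ (P e).support → x ∈ (P e').support → x ∈ Set.range b) ∧
    (∀ e e', e ≠ e' → ∀ a, a ∈ (P e).edges → a ∉ (P e').edges) ∧
    Q.verts = Set.range b ∪ ⋃ e, {x | x ∈ (P e).support} ∧
    (∀ x y, Q.Adj x y ↔ ∃ e, (P e).toSubgraph.Adj x y)

/-- `Q` is a maximum `M`-subdivision among those contained in the subgraph `H` of `G`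
(maximum with respect to the number of edges). -/
def IsMaxSubdivisionIn (M : Multigraph W F) (G : SimpleGraph V) (H Q : G.Subgraph) : Prop :=
  IsSubdivisionIn M G Q ∧ Q ≤ H ∧
    ∀ R : G.Subgraph, IsSubdivisionIn M G R → R ≤ H →
      R.edgeSet.ncard ≤ Q.edgeSet.ncard

/-- The family `L(M,H)` of maximum `M`-subdivisions in `H` is pairwise intersecting. -/
def PairwiseIntersectingIn (M : Multigraph W F) (G : SimpleGraph V) (H : G.Subgraph) : Prop :=
  ∀ Q R : G.Subgraph, IsMaxSubdivisionIn M G H Q → IsMaxSubdivisionIn M G H R →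
    (Q.verts ∩ R.verts).Nonempty

/-- `S` is a transversal of the family `L(M,H)` of maximum `M`-subdivisions in `H`. -/
def IsTransversalIn (M : Multigraph W F) (G : SimpleGraph V) (H : G.Subgraph)
    (S : Set V) : Prop :=
  ∀ Q : G.Subgraph, IsMaxSubdivisionIn M G H Q → (S ∩ Q.verts).Nonempty

/-- `(X, Y)` is an `H`-pretransversal: `Y ⊆ X ⊆ V(H)`, `n^{1/3}·|Y| ≤ |X|`
(where `n = |V(G)|`), and every maximum `M`-subdivision `Q` in `H` satisfies
`Q ⊆ H − X` or `Q ∩ Y ≠ ∅`. -/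
def IsPretransversal [Fintype V] (M : Multigraph W F) (G : SimpleGraph V)
    (H : G.Subgraph) (X Y : Set V) : Prop :=
  Y ⊆ X ∧ X ⊆ H.verts ∧
    (Fintype.card V : ℝ) ^ ((1 : ℝ) / 3) * (Y.ncard : ℝ) ≤ (X.ncard : ℝ) ∧
    ∀ Q : G.Subgraph, IsMaxSubdivisionIn M G H Q →
      Q ≤ H.deleteVerts X ∨ (Q.verts ∩ Y).Nonempty

/-- An `A,B`-connector of size `k` inside the subgraph `H` of `G`: `k` pairwise
vertex-disjoint paths of `H`, each meeting `A` exactly in its first vertex and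
meeting `B` exactly in its last vertex. -/
def IsConnector (G : SimpleGraph V) (H : G.Subgraph) (A B : Set V) (k : ℕ) : Prop :=
  ∃ (a : Fin k → V) (b : Fin k → V) (p : ∀ i : Fin k, G.Walk (a i) (b i)),
    (∀ i, (p i).IsPath) ∧
    (∀ i, (p i).toSubgraph ≤ H) ∧
    (∀ i, {x | x ∈ (p i).support} ∩ A = {a i}) ∧
    (∀ i, {x | x ∈ (p i).support} ∩ B = {b i}) ∧
    (∀ i j, i ≠ j → ∀ x, x ∈ (p i).support → x ∉ (p j).support)
/-- The star `K_{1,k}`: center `none` joined to each of the `k` leaves `some i`. -/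
def starMultigraph (k : ℕ) : Multigraph (Option (Fin k)) (Fin k) where
  ends e := s(none, some e)


section Gallai

variable {V : Type*} {G : SimpleGraph V} {k : ℕ}

lemma walk_isPath_append {u v w : V} {p : G.Walk u v} {q : G.Walk v w}
    (hp : p.IsPath) (hq : q.IsPath)
    (h : ∀ x, x ∈ p.support → x ∈ q.support → x = v) : (p.append q).IsPath := by
  rw [SimpleGraph.Walk.isPath_def, SimpleGraph.Walk.support_append]
  refine List.Nodup.append hp.support_nodup ?_ ?_
  · exact hq.support_nodup.tail
  · intro x hxp hxq
    have hxq' : x ∈ q.support := List.mem_of_mem_tail hxq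
    have hxv : x = v := h x hxp hxq'
    subst hxv
    have hnd := hq.support_nodup
    rw [q.support_eq_cons] at hnd
    exact (List.nodup_cons.mp hnd).1 hxq

structure SpiderData {V : Type*} (G : SimpleGraph V) (k : ℕ) where
  c : V
  t : Fin k → V
  P : ∀ i, G.Walk c (t i)
  isPath : ∀ i, (P i).IsPath
  hne : ∀ i, t i ≠ c
  hinj : Function.Injective t
  hbranch : ∀ i j, t j ∈ (P i).support → j = i
  hdisj : ∀ i j, i ≠ j → ∀ x, x ∈ (P i).support → x ∈ (P j).support → x = c

namespace SpiderData

variable (S : SpiderData G k)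

def vset : Set V := ⋃ i, {z | z ∈ (S.P i).support}

def eset : Set (Sym2 V) := ⋃ i, {a | a ∈ (S.P i).edges}

lemma mem_vset {z : V} : z ∈ S.vset ↔ ∃ i, z ∈ (S.P i).support := by
  simp [vset]

lemma support_subset_vset (i : Fin k) {z : V} (h : z ∈ (S.P i).support) : z ∈ S.vset :=
  S.mem_vset.mpr ⟨i, h⟩

lemma c_mem_vset (hk : 0 < k) : S.c ∈ S.vset :=
  S.support_subset_vset ⟨0, hk⟩ (SimpleGraph.Walk.start_mem_support _)

lemma t_mem_vset (i : Fin k) : S.t i ∈ S.vset :=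
  S.support_subset_vset i (SimpleGraph.Walk.end_mem_support _)

lemma edisj {i j : Fin k} (hij : i ≠ j) {a : Sym2 V}
    (ha : a ∈ (S.P i).edges) : a ∉ (S.P j).edges := by
  induction a using Sym2.ind with
  | _ z w =>
    intro hb
    have hz : z = S.c := S.hdisj i j hij z
      ((S.P i).fst_mem_support_of_mem_edges ha) ((S.P j).fst_mem_support_of_mem_edges hb)
    have hw : w = S.c := S.hdisj i j hij w
      ((S.P i).snd_mem_support_of_mem_edges ha) ((S.P j).snd_mem_support_of_mem_edges hb)
    subst hz; subst hw
    exact G.irrefl ((S.P i).adj_of_mem_edges ha)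

lemma eset_ncard : S.eset.ncard = ∑ i, (S.P i).length := by
  classical
  have he : S.eset = ↑(Finset.univ.biUnion fun i => (S.P i).edges.toFinset) := by
    ext a; simp [eset]
  rw [he, Set.ncard_coe_finset, Finset.card_biUnion]
  · refine Finset.sum_congr rfl fun i _ => ?_
    rw [List.toFinset_card_of_nodup (S.isPath i).edges_nodup, SimpleGraph.Walk.length_edges]
  · intro i _ j _ hij
    simp only [Function.onFun]
    rw [Finset.disjoint_left]
    intro a ha hb
    simp only [List.mem_toFinset] at ha hb
    exact S.edisj hij ha hb

def sub : G.Subgraph where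
  verts := S.vset
  Adj x y := ∃ i, (S.P i).toSubgraph.Adj x y
  adj_sub := fun ⟨i, h⟩ => (S.P i).toSubgraph.adj_sub h
  edge_vert := fun ⟨i, h⟩ => S.support_subset_vset i
    (((S.P i).mem_verts_toSubgraph).mp ((S.P i).toSubgraph.edge_vert h))
  symm := ⟨fun x y ⟨i, h⟩ => ⟨i, h.symm⟩⟩

lemma sub_verts : S.sub.verts = S.vset := rfl

lemma sub_edgeSet : S.sub.edgeSet = S.eset := by
  ext a
  induction a using Sym2.ind with
  | _ z w =>
    rw [SimpleGraph.Subgraph.mem_edgeSet]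
    constructor
    · rintro ⟨i, h⟩
      have : s(z, w) ∈ (S.P i).toSubgraph.edgeSet := SimpleGraph.Subgraph.mem_edgeSet.mpr h
      rw [SimpleGraph.Walk.edgeSet_toSubgraph] at this
      exact Set.mem_iUnion.mpr ⟨i, this⟩
    · intro h
      obtain ⟨i, hi⟩ := Set.mem_iUnion.mp h
      exact ⟨i, SimpleGraph.Subgraph.mem_edgeSet.mp
        (((S.P i).edgeSet_toSubgraph).symm ▸ hi)⟩

def bfun : Option (Fin k) → V := fun o => o.elim S.c S.t

lemma bfun_inj : Function.Injective S.bfun := by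
  rintro (_ | n) (_ | m) h
  · rfl
  · exact absurd h.symm (S.hne m)
  · exact absurd h (S.hne n)
  · exact congrArg some (S.hinj h)

lemma range_bfun_subset (hk : 0 < k) : Set.range S.bfun ⊆ S.vset := by
  rintro z ⟨(_ | n), rfl⟩
  · exact S.c_mem_vset hk
  · exact S.t_mem_vset n

lemma isSubdivisionIn (hk : 0 < k) : IsSubdivisionIn (starMultigraph k) G S.sub := by
  refine ⟨S.bfun, fun _ => none, fun e => some e, S.P, S.bfun_inj, fun e => rfl,
    ?_, ?_, ?_, ?_, ?_, ?_, ?_⟩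
  · intro e h; exact absurd h (by simp)
  · intro e _; exact S.isPath e
  · rintro e x hx ⟨(_ | n), rfl⟩
    · exact Or.inl rfl
    · exact Or.inr (congrArg (some · |>.elim S.c S.t) (S.hbranch e n hx) :)
  · intro e e' hne x h1 h2
    exact ⟨none, (S.hdisj e e' hne x h1 h2).symm⟩
  · intro e e' hne a ha
    exact S.edisj hne ha
  · exact (Set.union_eq_self_of_subset_left (S.range_bfun_subset hk)).symm
  · intro x y; exact Iff.rfl

end SpiderData

section Orient

variable {b : Option (Fin k) → V} {u v : Fin k → Option (Fin k)}

def orient (P : ∀ e : Fin k, G.Walk (b (u e)) (b (v e)))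
    (hcase : ∀ e, (u e = none ∧ v e = some e) ∨ (u e = some e ∧ v e = none))
    (e : Fin k) : G.Walk (b none) (b (some e)) :=
  if h : u e = none then
    have hv : v e = some e := (hcase e).elim And.right
      (fun hc => absurd (h.symm.trans hc.1) (by simp))
    (P e).copy (congrArg b h) (congrArg b hv)
  else
    have hu : u e = some e := (hcase e).elim (fun hc => absurd hc.1 h) And.left
    have hv : v e = none := (hcase e).elim (fun hc => absurd hc.1 h) And.right
    ((P e).copy (congrArg b hu) (congrArg b hv)).reverse

variable (P : ∀ e : Fin k, G.Walk (b (u e)) (b (v e)))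
    (hcase : ∀ e, (u e = none ∧ v e = some e) ∨ (u e = some e ∧ v e = none)) (e : Fin k)

lemma orient_support {z : V} : z ∈ (orient P hcase e).support ↔ z ∈ (P e).support := by
  unfold orient; split <;> simp

lemma orient_edges {a : Sym2 V} : a ∈ (orient P hcase e).edges ↔ a ∈ (P e).edges := by
  unfold orient; split <;> simp

lemma orient_length : (orient P hcase e).length = (P e).length := by
  unfold orient; split <;> simp

lemma orient_isPath (h : (P e).IsPath) : (orient P hcase e).IsPath := by
  unfold orient; split
  · simpa using h
  · simpa using h.reverse

end Orient

lemma extract_spider (hk : 0 < k) {R : G.Subgraph}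
    (h : IsSubdivisionIn (starMultigraph k) G R) :
    ∃ S : SpiderData G k, R.verts = S.vset ∧ R.edgeSet = S.eset := by
  obtain ⟨b, u, v, P, hbinj, hends, -, hpath, hint, hsup, -, hverts, hadj⟩ := h
  have hcase : ∀ e, (u e = none ∧ v e = some e) ∨ (u e = some e ∧ v e = none) := by
    intro e
    have := hends e
    rw [starMultigraph, Sym2.eq_iff] at this
    rcases this with ⟨h1, h2⟩ | ⟨h1, h2⟩
    · exact Or.inl ⟨h1.symm, h2.symm⟩
    · exact Or.inr ⟨h2.symm, h1.symm⟩
  have hne_uv : ∀ e, u e ≠ v e := by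
    intro e heq
    rcases hcase e with ⟨h1, h2⟩ | ⟨h1, h2⟩ <;> rw [h1, h2] at heq <;> simp at heq
  have hbr : ∀ e (n : Fin k), b (some n) ∈ (P e).support → n = e := by
    intro e n hz
    rcases hint e _ hz ⟨some n, rfl⟩ with h1 | h1
    · rcases hcase e with ⟨h2, -⟩ | ⟨h2, -⟩
      · rw [h2] at h1; exact absurd (hbinj h1) (by simp)
      · rw [h2] at h1; exact Option.some_injective _ (hbinj h1)
    · rcases hcase e with ⟨-, h2⟩ | ⟨-, h2⟩
      · rw [h2] at h1; exact Option.some_injective _ (hbinj h1)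
      · rw [h2] at h1; exact absurd (hbinj h1) (by simp)
  refine ⟨⟨b none, fun n => b (some n), orient P hcase,
    fun e => orient_isPath P hcase e (hpath e (hne_uv e)),
    fun n hn => by simpa using hbinj hn,
    fun n m hnm => Option.some_injective _ (hbinj hnm),
    fun e n hz => hbr e n ((orient_support P hcase e).mp hz),
    ?_⟩, ?_, ?_⟩
  · intro e e' hee z hz hz'
    rw [orient_support] at hz hz'
    obtain ⟨o, rfl⟩ := hsup e e' hee z hz hz'
    cases o with
    | none => rfl
    | some n => exact absurd ((hbr e n hz).symm.trans (hbr e' n hz')) hee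
  · have hsubr : Set.range b ⊆ ⋃ e, {x | x ∈ (P e).support} := by
      rintro z ⟨(_ | n), rfl⟩
      · exact Set.mem_iUnion.mpr ⟨⟨0, hk⟩,
          (orient_support P hcase _).mp ((orient P hcase ⟨0, hk⟩).start_mem_support)⟩
      · exact Set.mem_iUnion.mpr ⟨n,
          (orient_support P hcase _).mp ((orient P hcase n).end_mem_support)⟩
    rw [hverts, Set.union_eq_self_of_subset_left hsubr, SpiderData.vset]
    ext z
    simp only [Set.mem_iUnion, Set.mem_setOf_eq]
    exact exists_congr fun e => (orient_support P hcase e).symm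
  · ext a
    induction a using Sym2.ind with
    | _ z w =>
      rw [SimpleGraph.Subgraph.mem_edgeSet, hadj, SpiderData.eset]
      simp only [Set.mem_iUnion, Set.mem_setOf_eq]
      refine exists_congr fun e => ?_
      rw [orient_edges]
      constructor
      · intro he
        exact ((P e).mem_edges_toSubgraph).mp (SimpleGraph.Subgraph.mem_edgeSet.mpr he)
      · intro he
        exact SimpleGraph.Subgraph.mem_edgeSet.mp (((P e).mem_edges_toSubgraph).mpr he)

lemma exists_prefix_to_set (B : Set V) :
    ∀ {a b : V} (w : G.Walk a b), b ∈ B →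
      ∃ (y : V) (q : G.Walk a y), y ∈ B ∧ q.IsPath ∧
        (∀ z ∈ q.support, z ∈ B → z = y) ∧ (∀ z ∈ q.support, z ∈ w.support) := by
  classical
  intro a b w
  induction w with
  | @nil a₀ =>
    intro hB
    exact ⟨a₀, SimpleGraph.Walk.nil, hB, SimpleGraph.Walk.IsPath.nil, by simp, by simp⟩
  | @cons a' v' b' h w' ih =>
    intro hB
    by_cases hu : a' ∈ B
    · exact ⟨a', SimpleGraph.Walk.nil, hu, SimpleGraph.Walk.IsPath.nil, by simp, by simp⟩
    · obtain ⟨y, q, hy, hqp, hqB, hqsup⟩ := ih hB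
      refine ⟨y, (SimpleGraph.Walk.cons h q).bypass, hy,
        SimpleGraph.Walk.bypass_isPath _, ?_, ?_⟩
      · intro z hz hzB
        have hz' := (SimpleGraph.Walk.cons h q).support_bypass_subset hz
        rw [SimpleGraph.Walk.support_cons] at hz'
        rcases List.mem_cons.mp hz' with rfl | hz'
        · exact absurd hzB hu
        · exact hqB z hz' hzB
      · intro z hz
        have hz' := (SimpleGraph.Walk.cons h q).support_bypass_subset hz
        rw [SimpleGraph.Walk.support_cons] at hz'
        rw [SimpleGraph.Walk.support_cons]
        rcases List.mem_cons.mp hz' with rfl | hz'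
        · exact List.mem_cons_self
        · exact List.mem_cons_of_mem _ (hqsup z hz')

lemma exists_bridge (A B : Set V) {a b : V} (w : G.Walk a b) (ha : a ∈ A) (hb : b ∈ B) :
    ∃ (x y : V) (p : G.Walk x y), x ∈ A ∧ y ∈ B ∧ p.IsPath ∧
      (∀ z ∈ p.support, z ∈ A → z = x) ∧ (∀ z ∈ p.support, z ∈ B → z = y) := by
  obtain ⟨y, q, hy, hqp, hqB, hqsup⟩ := exists_prefix_to_set B w hb
  obtain ⟨x, q₂, hx, hq₂p, hq₂A, hq₂sup⟩ := exists_prefix_to_set A q.reverse ha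
  refine ⟨x, y, q₂.reverse, hx, hy, hq₂p.reverse, ?_, ?_⟩
  · intro z hz hzA
    rw [SimpleGraph.Walk.support_reverse, List.mem_reverse] at hz
    exact hq₂A z hz hzA
  · intro z hz hzB
    rw [SimpleGraph.Walk.support_reverse, List.mem_reverse] at hz
    have := hq₂sup z hz
    rw [SimpleGraph.Walk.support_reverse, List.mem_reverse] at this
    exact hqB z this hzB

lemma surgery [DecidableEq V] (hk : 0 < k) (S T : SpiderData G k)
    (hdVT : ∀ z, z ∈ S.vset → z ∉ T.vset)
    {x y : V} (p : G.Walk x y) (hp : p.IsPath)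
    {i j : Fin k} (hx : x ∈ (S.P i).support) (hy : y ∈ (T.P j).support)
    (hpA : ∀ z ∈ p.support, z ∈ S.vset → z = x)
    (hpB : ∀ z ∈ p.support, z ∈ T.vset → z = y)
    (hlen : ((T.P j).dropUntil y hy).length ≤ ((S.P i).dropUntil x hx).length) :
    ∃ U : SpiderData G k, T.eset.ncard < U.eset.ncard := by
  classical
  set dropQ : G.Walk x (S.t i) := (S.P i).dropUntil x hx with hdq
  set takeR : G.Walk T.c y := (T.P j).takeUntil y hy with htr
  set dropR : G.Walk y (T.t j) := (T.P j).dropUntil y hy with hdr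
  have hsubdQ : ∀ z ∈ dropQ.support, z ∈ S.vset := fun z hz =>
    S.support_subset_vset i ((S.P i).support_dropUntil_subset hx hz)
  have hsubtR : ∀ z ∈ takeR.support, z ∈ (T.P j).support := fun z hz =>
    (T.P j).support_takeUntil_subset hy hz
  have hxS : x ∈ S.vset := S.support_subset_vset i hx
  have hyT : y ∈ T.vset := T.support_subset_vset j hy
  have hxy : x ≠ y := fun h => hdVT x hxS (h ▸ hyT)
  have hplen : 1 ≤ p.length := by
    rcases Nat.eq_zero_or_pos p.length with h0 | h1
    · exact absurd (SimpleGraph.Walk.eq_of_length_eq_zero h0) hxy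
    · exact h1
  set q : G.Walk y x := p.reverse with hqdef
  have hq : q.IsPath := hp.reverse
  have hqsup : ∀ z, z ∈ q.support ↔ z ∈ p.support := by
    intro z; rw [hqdef, SimpleGraph.Walk.support_reverse, List.mem_reverse]
  have hqlen : q.length = p.length := by rw [hqdef, SimpleGraph.Walk.length_reverse]
  have hinner_path : (q.append dropQ).IsPath :=
    walk_isPath_append hq ((S.isPath i).dropUntil hx)
      (fun z hz1 hz2 => hpA z ((hqsup z).mp hz1) (hsubdQ z hz2))
  have hnew_path : (takeR.append (q.append dropQ)).IsPath := by
    refine walk_isPath_append ((T.isPath j).takeUntil hy) hinner_path ?_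
    intro z hz1 hz2
    rcases (SimpleGraph.Walk.mem_support_append_iff _ _).mp hz2 with hz2 | hz2
    · exact hpB z ((hqsup z).mp hz2) (T.support_subset_vset j (hsubtR z hz1))
    · exact absurd (T.support_subset_vset j (hsubtR z hz1)) (hdVT z (hsubdQ z hz2))
  set newleg : G.Walk T.c (S.t i) := takeR.append (q.append dropQ) with hnl
  have hnew_sup : ∀ z, z ∈ newleg.support ↔
      (z ∈ takeR.support ∨ z ∈ p.support ∨ z ∈ dropQ.support) := by
    intro z
    rw [hnl, SimpleGraph.Walk.mem_support_append_iff,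
      SimpleGraph.Walk.mem_support_append_iff, hqsup z]
  have hlen_new : newleg.length = takeR.length + (p.length + dropQ.length) := by
    rw [hnl, SimpleGraph.Walk.length_append, SimpleGraph.Walk.length_append, hqlen]
  have hsplitT : takeR.length + dropR.length = (T.P j).length := by
    conv_rhs => rw [← (T.P j).take_spec hy]
    rw [SimpleGraph.Walk.length_append]
  -- membership helpers for the new leg
  have hnewmemT : ∀ z, z ∈ newleg.support → z ∈ T.vset → z ∈ (T.P j).support := by
    intro z hz hzT
    rcases (hnew_sup z).mp hz with h1 | h1 | h1
    · exact hsubtR z h1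
    · exact (hpB z h1 hzT) ▸ hy
    · exact absurd hzT (hdVT z (hsubdQ z h1))
  refine ⟨⟨T.c, fun m => if m = j then S.t i else T.t m,
    fun m => if h : m = j then newleg.copy rfl (by simp [h])
      else (T.P m).copy rfl (by simp [h]), ?_, ?_, ?_, ?_, ?_⟩, ?_⟩
  · intro m
    by_cases hm : m = j
    · simp only [dif_pos hm, SimpleGraph.Walk.isPath_copy]; exact hnew_path
    · simp only [dif_neg hm, SimpleGraph.Walk.isPath_copy]; exact T.isPath m
  · intro m
    by_cases hm : m = j
    · simp only [if_pos hm]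
      intro h
      exact hdVT _ (S.t_mem_vset i) (h ▸ T.c_mem_vset hk)
    · simp only [if_neg hm]; exact T.hne m
  · intro m n h
    by_cases hm : m = j <;> by_cases hn : n = j
    · rw [hm, hn]
    · simp only [if_pos hm, if_neg hn] at h
      exact absurd (h ▸ T.t_mem_vset n) (hdVT _ (S.t_mem_vset i))
    · simp only [if_neg hm, if_pos hn] at h
      exact absurd (h.symm ▸ T.t_mem_vset m) (hdVT _ (S.t_mem_vset i))
    · simp only [if_neg hm, if_neg hn] at h
      exact T.hinj h
  · intro m n hmem
    by_cases hm : m = j <;> by_cases hn : n = j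
    · rw [hm, hn]
    · -- m = j : new leg contains T.t n
      exfalso
      simp only [dif_pos hm, SimpleGraph.Walk.support_copy, if_neg hn] at hmem
      have hmem' : T.t n ∈ newleg.support := by
        subst hm; exact hmem
      have := hnewmemT _ hmem' (T.t_mem_vset n)
      exact hn (T.hbranch j n this)
    · -- m ≠ j, n = j : T.P m contains S.t i
      exfalso
      simp only [dif_neg hm, SimpleGraph.Walk.support_copy, if_pos hn] at hmem
      exact hdVT _ (S.t_mem_vset i) (T.support_subset_vset m hmem)
    · simp only [dif_neg hm, SimpleGraph.Walk.support_copy, if_neg hn] at hmem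
      exact T.hbranch m n hmem
  · intro m n hmn z h1 h2
    by_cases hm : m = j <;> by_cases hn : n = j
    · exact absurd (hm.trans hn.symm) hmn
    · simp only [dif_pos hm, SimpleGraph.Walk.support_copy] at h1
      simp only [dif_neg hn, SimpleGraph.Walk.support_copy] at h2
      have h1' : z ∈ newleg.support := by subst hm; exact h1
      have hzj : z ∈ (T.P j).support :=
        hnewmemT _ h1' (T.support_subset_vset n h2)
      exact T.hdisj j n (fun h => hn h.symm) z hzj h2
    · simp only [dif_neg hm, SimpleGraph.Walk.support_copy] at h1
      simp only [dif_pos hn, SimpleGraph.Walk.support_copy] at h2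
      have h2' : z ∈ newleg.support := by subst hn; exact h2
      have hzj : z ∈ (T.P j).support :=
        hnewmemT _ h2' (T.support_subset_vset m h1)
      exact T.hdisj m j (fun h => hm h) z h1 hzj
    · simp only [dif_neg hm, SimpleGraph.Walk.support_copy] at h1
      simp only [dif_neg hn, SimpleGraph.Walk.support_copy] at h2
      exact T.hdisj m n hmn z h1 h2
  · rw [SpiderData.eset_ncard, SpiderData.eset_ncard]
    refine Finset.sum_lt_sum (fun m _ => ?_) ⟨j, Finset.mem_univ j, ?_⟩
    · by_cases hm : m = j
      · subst hm
        simp only [dif_pos rfl, dite_true, eq_self_iff_true, SimpleGraph.Walk.length_copy,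
          hlen_new, ← hsplitT]
        omega
      · simp only [dif_neg hm, SimpleGraph.Walk.length_copy]
        omega
    · simp only [dif_pos rfl, dite_true, eq_self_iff_true, SimpleGraph.Walk.length_copy,
        hlen_new, ← hsplitT]
      omega

end Gallai

/-- If `M = K_{1,k}` is a star with `k ≥ 1` and `G` is a connected
graph containing an `M`-subdivision, then `L(M,G)` is pairwise intersecting. -/
theorem gallai_stmt15 {V : Type*} [Fintype V] (k : ℕ) (hk : 1 ≤ k)
    (G : SimpleGraph V) (hG : G.Connected)
    (hex : ∃ Q : SimpleGraph.Subgraph G, IsSubdivisionIn (starMultigraph k) G Q) :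
    PairwiseIntersectingIn (starMultigraph k) G ⊤ := by
  classical
  intro Q R hQ hR
  by_contra hcon
  rw [Set.not_nonempty_iff_eq_empty] at hcon
  have hk0 : 0 < k := hk
  obtain ⟨SQ, hQv, hQe⟩ := extract_spider hk0 hQ.1
  obtain ⟨SR, hRv, hRe⟩ := extract_spider hk0 hR.1
  have hdisj : ∀ z, z ∈ SQ.vset → z ∉ SR.vset := by
    intro z h1 h2
    have : z ∈ Q.verts ∩ R.verts := ⟨hQv ▸ h1, hRv ▸ h2⟩
    rw [hcon] at this
    exact this
  obtain ⟨w⟩ := hG.preconnected SQ.c SR.c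
  obtain ⟨x, y, p, hxA, hyB, hpp, hpA, hpB⟩ :=
    exists_bridge SQ.vset SR.vset w (SQ.c_mem_vset hk0) (SR.c_mem_vset hk0)
  obtain ⟨i, hx⟩ := SQ.mem_vset.mp hxA
  obtain ⟨j, hy⟩ := SR.mem_vset.mp hyB
  rcases le_total ((SR.P j).dropUntil y hy).length ((SQ.P i).dropUntil x hx).length
    with hle | hle
  · obtain ⟨U, hU⟩ := surgery hk0 SQ SR hdisj p hpp hx hy hpA hpB hle
    have h1 := hR.2.2 U.sub (U.isSubdivisionIn hk0) le_top
    rw [U.sub_edgeSet, hRe] at h1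
    exact absurd h1 (not_le.mpr hU)
  · have hdisj' : ∀ z, z ∈ SR.vset → z ∉ SQ.vset := fun z h2 h1 => hdisj z h1 h2
    have hpA' : ∀ z ∈ p.reverse.support, z ∈ SR.vset → z = y := by
      intro z hz
      rw [SimpleGraph.Walk.support_reverse, List.mem_reverse] at hz
      exact hpB z hz
    have hpB' : ∀ z ∈ p.reverse.support, z ∈ SQ.vset → z = x := by
      intro z hz
      rw [SimpleGraph.Walk.support_reverse, List.mem_reverse] at hz
      exact hpA z hz
    obtain ⟨U, hU⟩ := surgery hk0 SR SQ hdisj' p.reverse hpp.reverse hy hx hpA' hpB' hle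
    have h1 := hQ.2.2 U.sub (U.isSubdivisionIn hk0) le_top
    rw [U.sub_edgeSet, hQe] at h1
    exact absurd h1 (not_le.mpr hU)
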